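/- The squared phase of the Lagrangian torus fibers of M_N with respect to the meromorphic volume form Ω/w is real: if Ω is the holomorphic volume form on M_N satisfying Ω(X_{H1}, ·) = i·dw along M_N, and T is the tangent plane to a torus fiber {H1 = b₁, |w|² = b₂} spanned by X_{H1} and X_{H2}, then Im((Ω/w)(X_{H1}, X_{H2})) = 0; equivalently (Ω/w)(X_{H1}, X_{H2}) = i·d(log w)(X_{H2}) has zero imaginary part since d(log|w|)(X_{H2}) = 0. -/

import Mathlib

open Finset

/-- `p(w) = (w-1)(w-2)⋯(w-N)`. -/
noncomputable def pN (N : ℕ) (w : ℂ) : ℂ := ∏ k ∈ Finset.Icc 1 N, (w - (k : ℂ))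

/-- The torus fibers of `M_N` are special Lagrangian for `Ω/w`: writing
`Ω = (∂P/∂w)⁻¹ du∧dv` at a point where `∂P/∂w = -p'(w) ≠ 0`, one has
`Ω(X_{H1}, V) = i·dw(V)` for tangent `V`, and for `V` preserving `H2 = |w|²`
(`Re(w̄·V₃) = 0`, `w ≠ 0`) the squared phase `(Ω/w)(X_{H1}, V)` has zero imaginary
part. -/
theorem torus_fibers_special_lagrangian (N : ℕ) (u v w : ℂ)
    (hM : u * v = pN N w) (hw : w ≠ 0) (hq : deriv (pN N) w ≠ 0)
    (V : ℂ × ℂ × ℂ)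
    (hVtan : v * V.1 + u * V.2.1 - deriv (pN N) w * V.2.2 = 0)
    (hVpres : ((starRingEnd ℂ) w * V.2.2).re = 0) :
    let Omg : (ℂ × ℂ × ℂ) → (ℂ × ℂ × ℂ) → ℂ :=
      fun X Y => (-(deriv (pN N) w))⁻¹ * (X.1 * Y.2.1 - X.2.1 * Y.1)
    let XH1 : ℂ × ℂ × ℂ := (-(Complex.I) * u, Complex.I * v, 0)
    Omg XH1 V = Complex.I * V.2.2 ∧ (Omg XH1 V / w).im = 0 := by
  intro Omg XH1
  have h1 : Omg XH1 V = Complex.I * V.2.2 := by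
    have hsub : u * V.2.1 + v * V.1 = deriv (pN N) w * V.2.2 := by linear_combination hVtan
    show (-(deriv (pN N) w))⁻¹ * ((-(Complex.I) * u) * V.2.1 - (Complex.I * v) * V.1)
        = Complex.I * V.2.2
    have : (-(Complex.I) * u) * V.2.1 - (Complex.I * v) * V.1
        = -(Complex.I) * (deriv (pN N) w * V.2.2) := by
      linear_combination (-(Complex.I)) * hsub
    rw [this]
    field_simp
  refine ⟨h1, ?_⟩
  rw [h1, Complex.div_im]
  have hnum : V.2.2.re * w.re + V.2.2.im * w.im = 0 := by
    have := hVpres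
    simp [Complex.mul_re, Complex.conj_re, Complex.conj_im] at this
    linarith
  have h2 : (Complex.I * V.2.2).im * w.re - (Complex.I * V.2.2).re * w.im = 0 := by
    simp [Complex.mul_im, Complex.mul_re]
    linarith
  rw [div_sub_div_same, h2, zero_div]
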